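/- Let s and r be independent, identically distributed random variables, exponentially distributed with mean Ω > 0. Then E[1{r ≥ s}·log₂(1+r)] = (1/ln 2)·e^{1/Ω}·E₁(1/Ω) − (1/(2 ln 2))·e^{2/Ω}·E₁(2/Ω). (This is the maximal throughput τ_max of buffer-aided relaying with adaptive link selection for symmetric Rayleigh links, equation (21) of the paper.) -/

import Mathlib

open MeasureTheory ProbabilityTheory Set Real
open scoped NNReal ENNReal

/-- The exponential integral function `E₁(x) = ∫_x^∞ e^{-t}/t dt`. -/
noncomputable def expIntE1 (x : ℝ) : ℝ := ∫ t in Set.Ioi x, Real.exp (-t) / t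

/-- The law of an exponentially distributed random variable with mean `Ω`:
the measure on `ℝ` with density `(1/Ω) e^{-x/Ω}` on `[0,∞)` with respect to
Lebesgue measure. -/
noncomputable def expLaw (Ω : ℝ) : Measure ℝ :=
  (volume.restrict (Set.Ici (0 : ℝ))).withDensity
    (fun x => ENNReal.ofReal ((1 / Ω) * Real.exp (-x / Ω)))

lemma expLaw_eq (Om : ℝ) : expLaw Om = expMeasure (1/Om) := by
  rw [expLaw, expMeasure, gammaMeasure, ← withDensity_indicator measurableSet_Ici]
  congr 1
  ext x
  rw [show gammaPDF 1 (1/Om) x = exponentialPDF (1/Om) x from rfl, exponentialPDF_eq]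
  by_cases hx : 0 ≤ x
  · rw [Set.indicator_of_mem (a := x) (s := Ici (0:ℝ)) hx, if_pos hx]
    congr 2
    ring_nf
  · simp [Set.indicator_of_notMem (a := x) (s := Ici (0:ℝ)) hx, if_neg hx]

lemma expLaw_isProb {Om : ℝ} (hOm : 0 < Om) : IsProbabilityMeasure (expLaw Om) := by
  rw [expLaw_eq]; exact isProbabilityMeasure_expMeasure (by positivity)

lemma expLaw_Iic {Om : ℝ} (hOm : 0 < Om) {y : ℝ} (hy : 0 ≤ y) :
    expLaw Om (Set.Iic y) = ENNReal.ofReal (1 - Real.exp (-(y/Om))) := by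
  rw [expLaw_eq, expMeasure, gammaMeasure, withDensity_apply _ measurableSet_Iic]
  have := lintegral_exponentialPDF_eq_antiDeriv (r := 1/Om) (by positivity) y
  rw [show (gammaPDF 1 (1/Om)) = exponentialPDF (1/Om) from rfl, this, if_pos hy,
    one_div, inv_mul_eq_div]

lemma integrableOn_log_mul_exp {a : ℝ} (ha : 0 < a) :
    IntegrableOn (fun x => Real.log (1+x) * Real.exp (-(a*x))) (Set.Ioi 0) := by
  have hbound : IntegrableOn (fun x : ℝ => x * Real.exp (-(a*x))) (Set.Ioi 0) := by
    have := integrableOn_rpow_mul_exp_neg_mul_rpow (s := 1) (p := 1) (b := a)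
      (by norm_num) zero_lt_one ha
    simpa [Real.rpow_one, neg_mul] using this
  refine hbound.integrable.mono' ?_ ?_
  · exact ((Real.measurable_log.comp (measurable_const.add measurable_id)).mul
      (Real.measurable_exp.comp ((measurable_id.const_mul a).neg))).aestronglyMeasurable
  · filter_upwards [ae_restrict_mem measurableSet_Ioi] with x hx
    have hx0 : (0:ℝ) < x := hx
    have h1 : 0 ≤ Real.log (1+x) := Real.log_nonneg (by linarith)
    have h2 : Real.log (1+x) ≤ x := by
      have := Real.log_le_sub_one_of_pos (x := 1+x) (by linarith)
      linarith
    rw [norm_mul, Real.norm_eq_abs, Real.norm_eq_abs, abs_of_nonneg h1,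
      abs_of_nonneg (Real.exp_pos _).le]
    exact mul_le_mul_of_nonneg_right h2 (Real.exp_pos _).le

lemma integrableOn_exp_div {a : ℝ} (ha : 0 < a) :
    IntegrableOn (fun x => Real.exp (-(a*x)) / (1+x)) (Set.Ioi 0) := by
  have hbound : IntegrableOn (fun x : ℝ => Real.exp (-(a*x))) (Set.Ioi 0) := by
    simpa [neg_mul] using exp_neg_integrableOn_Ioi 0 ha
  refine hbound.integrable.mono' ?_ ?_
  · exact ((Real.measurable_exp.comp ((measurable_id.const_mul a).neg)).div
      (measurable_const.add measurable_id)).aestronglyMeasurable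
  · filter_upwards [ae_restrict_mem measurableSet_Ioi] with x hx
    have hx0 : (0:ℝ) < x := hx
    rw [Real.norm_eq_abs, abs_of_nonneg (by positivity : (0:ℝ) ≤ Real.exp (-(a*x)) / (1+x)),
      div_le_iff₀ (by linarith : (0:ℝ) < 1 + x)]
    nlinarith [Real.exp_pos (-(a*x))]

lemma integral_exp_div_eq {a : ℝ} (ha : 0 < a) :
    ∫ x in Set.Ioi (0:ℝ), Real.exp (-(a*x)) / (1+x) = Real.exp a * expIntE1 a := by
  have key : ∫ x in Set.Ioi (1:ℝ), Real.exp (-(a*x)) / x = expIntE1 a := by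
    have h := integral_comp_mul_left_Ioi (fun t => Real.exp (-t) / t) 1 ha
    simp only [smul_eq_mul, mul_one] at h
    have h2 : ∫ x in Set.Ioi (1:ℝ), Real.exp (-(a*x)) / (a*x)
        = a⁻¹ * ∫ x in Set.Ioi (1:ℝ), Real.exp (-(a*x)) / x := by
      rw [← integral_const_mul]
      congr 1; ext x; field_simp
    rw [h2] at h
    have := mul_left_cancel₀ (inv_ne_zero ha.ne') h.symm
    rw [← this]; rfl
  have hshift : ∫ x in Set.Ioi (1:ℝ), Real.exp (-(a*x)) / x
      = ∫ x in Set.Ioi (0:ℝ), Real.exp (-(a*(x+1))) / (x+1) := by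
    have hemb : MeasurableEmbedding (fun x : ℝ => x + 1) :=
      (MeasurableEquiv.addRight (1:ℝ)).measurableEmbedding
    have hmap : Measure.map (fun x : ℝ => x + 1) volume = volume :=
      map_add_right_eq_self volume 1
    calc ∫ x in Set.Ioi (1:ℝ), Real.exp (-(a*x)) / x
        = ∫ x in Set.Ioi (1:ℝ), Real.exp (-(a*x)) / x ∂(Measure.map (fun x : ℝ => x + 1) volume) := by
          rw [hmap]
      _ = ∫ x in (fun x : ℝ => x + 1) ⁻¹' Set.Ioi (1:ℝ), Real.exp (-(a*(x+1))) / (x+1) ∂volume :=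
          hemb.setIntegral_map _ _
      _ = ∫ x in Set.Ioi (0:ℝ), Real.exp (-(a*(x+1))) / (x+1) := by
          congr 1
          ext x
          simp [Set.mem_preimage, lt_add_iff_pos_left]
  rw [← key, hshift]
  rw [← integral_const_mul]
  congr 1; ext x
  rw [show -(a*(x+1)) = -a + -(a*x) by ring, Real.exp_add, add_comm x 1,
    ← mul_div_assoc, ← mul_assoc, ← Real.exp_add, add_neg_cancel, Real.exp_zero, one_mul]

lemma tendsto_exp_log_zero {a : ℝ} (ha : 0 < a) :
    Filter.Tendsto (fun x => Real.exp (-(a*x)) * Real.log (1+x)) Filter.atTop (nhds 0) := by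
  have hg : Filter.Tendsto (fun x : ℝ => a⁻¹ * ((a*x) * Real.exp (-(a*x))))
      Filter.atTop (nhds 0) := by
    have h1 : Filter.Tendsto (fun y : ℝ => y ^ (1:ℕ) * Real.exp (-y)) Filter.atTop (nhds 0) :=
      Real.tendsto_pow_mul_exp_neg_atTop_nhds_zero 1
    have h2 : Filter.Tendsto (fun x : ℝ => a * x) Filter.atTop Filter.atTop :=
      Filter.Tendsto.const_mul_atTop ha Filter.tendsto_id
    have := (h1.comp h2).const_mul a⁻¹
    simpa [Function.comp, pow_one] using this
  refine squeeze_zero' ?_ ?_ hg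
  · filter_upwards [Filter.eventually_ge_atTop (0:ℝ)] with x hx
    exact mul_nonneg (Real.exp_pos _).le (Real.log_nonneg (by linarith))
  · filter_upwards [Filter.eventually_ge_atTop (0:ℝ)] with x hx
    have h2 : Real.log (1+x) ≤ x := by
      have := Real.log_le_sub_one_of_pos (x := 1+x) (by linarith)
      linarith
    calc Real.exp (-(a*x)) * Real.log (1+x) ≤ Real.exp (-(a*x)) * x :=
          mul_le_mul_of_nonneg_left h2 (Real.exp_pos _).le
      _ = a⁻¹ * ((a*x) * Real.exp (-(a*x))) := by field_simp

lemma integral_log_mul_exp {a : ℝ} (ha : 0 < a) :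
    ∫ x in Set.Ioi (0:ℝ), Real.log (1+x) * Real.exp (-(a*x))
      = a⁻¹ * Real.exp a * expIntE1 a := by
  set F : ℝ → ℝ := fun x => -a⁻¹ * (Real.exp (-(a*x)) * Real.log (1+x)) with hF
  set f' : ℝ → ℝ := fun x =>
    Real.log (1+x) * Real.exp (-(a*x)) - a⁻¹ * (Real.exp (-(a*x)) / (1+x)) with hf'
  have hderiv : ∀ x ∈ Set.Ioi (0:ℝ), HasDerivAt F (f' x) x := by
    intro x hx
    have hx0 : (0:ℝ) < x := hx
    have h1 : HasDerivAt (fun x : ℝ => Real.exp (-(a*x))) (Real.exp (-(a*x)) * (-a)) x := by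
      have : HasDerivAt (fun x : ℝ => -(a*x)) (-a) x := by
        simpa using ((hasDerivAt_id x).const_mul a).fun_neg
      exact this.exp
    have h2 : HasDerivAt (fun x : ℝ => Real.log (1+x)) (1/(1+x)) x := by
      have h3 : HasDerivAt (fun x : ℝ => 1+x) 1 x := by
        simpa using (hasDerivAt_id x).const_add 1
      simpa using h3.log (by linarith)
    have := (h1.fun_mul h2).const_mul (-a⁻¹)
    refine this.congr_deriv ?_
    rw [hf']
    field_simp
    ring
  have hcont : ContinuousWithinAt F (Set.Ici 0) 0 := by
    apply ContinuousAt.continuousWithinAt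
    have h1 : ContinuousAt (fun x : ℝ => Real.exp (-(a*x))) 0 := by fun_prop
    have h2 : ContinuousAt (fun x : ℝ => Real.log (1+x)) 0 := by
      exact (Real.continuousAt_log (by norm_num)).comp (by fun_prop)
    exact (continuousAt_const.mul (h1.mul h2))
  have hint : IntegrableOn f' (Set.Ioi 0) := by
    exact (integrableOn_log_mul_exp ha).sub ((integrableOn_exp_div ha).const_mul a⁻¹)
  have htends : Filter.Tendsto F Filter.atTop (nhds 0) := by
    have h := (tendsto_exp_log_zero ha).const_mul (-a⁻¹)
    rw [mul_zero] at h
    exact h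
  have key := integral_Ioi_of_hasDerivAt_of_tendsto hcont hderiv hint htends
  have hF0 : F 0 = 0 := by simp [hF]
  rw [hF0, sub_zero] at key
  have hsplit := integral_sub (integrableOn_log_mul_exp ha)
    ((integrableOn_exp_div ha).const_mul a⁻¹)
  rw [hf'] at key
  rw [key] at hsplit
  have h2 : ∫ x in Set.Ioi (0:ℝ), a⁻¹ * (Real.exp (-(a*x)) / (1+x))
      = a⁻¹ * (Real.exp a * expIntE1 a) := by
    rw [integral_const_mul, integral_exp_div_eq ha]
  rw [h2] at hsplit
  have := sub_eq_zero.mp hsplit.symm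
  rw [this]; ring

lemma expLaw_dens_eq (Om : ℝ) : (fun x => ENNReal.ofReal ((1 / Om) * Real.exp (-x / Om)))
    = fun x => ((((1 / Om) * Real.exp (-x / Om)).toNNReal : ℝ≥0) : ℝ≥0∞) := rfl

lemma expLaw_dens_meas (Om : ℝ) :
    Measurable (fun x => ((1 / Om) * Real.exp (-x / Om)).toNNReal) := by
  apply Measurable.real_toNNReal
  exact (measurable_const.mul ((Real.measurable_exp.comp (measurable_id.neg.div_const Om))))

lemma expLaw_integral {Om : ℝ} (hOm : 0 < Om) (g : ℝ → ℝ) :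
    ∫ y, g y ∂(expLaw Om)
      = ∫ y in Set.Ici (0:ℝ), ((1 / Om) * Real.exp (-y / Om)) * g y := by
  rw [expLaw, expLaw_dens_eq, integral_withDensity_eq_integral_smul (expLaw_dens_meas Om)]
  congr 1
  ext y
  rw [NNReal.smul_def, Real.coe_toNNReal _ (by positivity), smul_eq_mul]

lemma expLaw_integrable_iff {Om : ℝ} (hOm : 0 < Om) (g : ℝ → ℝ) :
    Integrable g (expLaw Om)
      ↔ IntegrableOn (fun y => ((1 / Om) * Real.exp (-y / Om)) * g y) (Set.Ici 0) := by
  rw [expLaw, expLaw_dens_eq, integrable_withDensity_iff_integrable_smul (expLaw_dens_meas Om)]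
  constructor <;> intro h <;> [refine h.congr ?_; refine h.congr ?_] <;>
    filter_upwards with y <;>
    rw [NNReal.smul_def, Real.coe_toNNReal _ (by positivity), smul_eq_mul]

lemma integrable_logb_expLaw {Om : ℝ} (hOm : 0 < Om) :
    Integrable (fun y => Real.logb 2 (1+y)) (expLaw Om) := by
  rw [expLaw_integrable_iff hOm]
  rw [integrableOn_Ici_iff_integrableOn_Ioi]
  have h := ((integrableOn_log_mul_exp (a := 1/Om) (by positivity)).const_mul
    ((1/Om) * (Real.log 2)⁻¹))
  refine IntegrableOn.congr_fun h ?_ measurableSet_Ioi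
  intro x hx
  show 1 / Om * (Real.log 2)⁻¹ * (Real.log (1 + x) * rexp (-(1 / Om * x)))
    = 1 / Om * rexp (-x / Om) * Real.logb 2 (1 + x)
  rw [show Real.logb 2 (1+x) = Real.log (1+x) / Real.log 2 from rfl,
    show -x/Om = -(1/Om*x) by ring]
  ring

/-- For independent, identically exponentially distributed SNRs `s`, `r` with
mean `Ω > 0`, `E[1{r ≥ s} log₂(1+r)] = (1/ln 2) e^{1/Ω} E₁(1/Ω)
− (1/(2 ln 2)) e^{2/Ω} E₁(2/Ω)`: the maximal throughput `τ_max` of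
buffer-aided relaying with adaptive link selection for symmetric Rayleigh
links (equation (21) of the paper). -/
theorem symmetric_links_max_throughput
    {Ω : Type*} [MeasurableSpace Ω] (P : Measure Ω) [IsProbabilityMeasure P]
    (s r : Ω → ℝ) (hs : Measurable s) (hr : Measurable r)
    (Om : ℝ) (hOm : 0 < Om)
    (hlaws : P.map s = expLaw Om) (hlawr : P.map r = expLaw Om)
    (hindep : IndepFun s r P) :
    ∫ ω, (if s ω ≤ r ω then Real.logb 2 (1 + r ω) else 0) ∂P
      = (1 / Real.log 2) * Real.exp (1 / Om) * expIntE1 (1 / Om)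
        - (1 / (2 * Real.log 2)) * Real.exp (2 / Om) * expIntE1 (2 / Om) := by
  set μ := expLaw Om with hμ
  haveI hprob : IsProbabilityMeasure μ := expLaw_isProb hOm
  have hlogbm : Measurable fun y : ℝ => Real.logb 2 (1+y) :=
    (Real.measurable_log.comp (measurable_const.add measurable_id)).div_const _
  set f : ℝ × ℝ → ℝ := fun p => if p.1 ≤ p.2 then Real.logb 2 (1+p.2) else 0 with hf
  have hfm : Measurable f :=
    Measurable.ite (measurableSet_le measurable_fst measurable_snd)
      (hlogbm.comp measurable_snd) measurable_const
  have hmap : P.map (fun ω => (s ω, r ω)) = μ.prod μ := by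
    rw [show μ.prod μ = (P.map s).prod (P.map r) by rw [hlaws, hlawr]]
    exact (indepFun_iff_map_prod_eq_prod_map_map hs.aemeasurable hr.aemeasurable).mp hindep
  have hstep1 : ∫ ω, (if s ω ≤ r ω then Real.logb 2 (1 + r ω) else 0) ∂P
      = ∫ p, f p ∂(μ.prod μ) := by
    rw [← hmap, integral_map (hs.prodMk hr).aemeasurable hfm.aestronglyMeasurable]
  have hglog : Integrable (fun y => Real.logb 2 (1+y)) μ := integrable_logb_expLaw hOm
  have hsnd : Integrable (fun p : ℝ × ℝ => Real.logb 2 (1+p.2)) (μ.prod μ) := by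
    have hmapsnd : (μ.prod μ).map Prod.snd = μ := by
      rw [Measure.map_snd_prod, measure_univ, one_smul]
    refine (integrable_map_measure (by rw [hmapsnd]; exact hglog.aestronglyMeasurable)
      measurable_snd.aemeasurable).mp (by rwa [hmapsnd])
  have hfint : Integrable f (μ.prod μ) := by
    refine hsnd.norm.mono' hfm.aestronglyMeasurable ?_
    filter_upwards with p
    by_cases h : p.1 ≤ p.2 <;> simp [hf, h]
  rw [hstep1, integral_prod_symm f hfint]
  have hinner : ∀ y : ℝ, ∫ x, f (x, y) ∂μ = (μ (Iic y)).toReal * Real.logb 2 (1+y) := by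
    intro y
    have hind : (fun x => f (x, y)) = (Iic y).indicator (fun _ => Real.logb 2 (1+y)) := by
      ext x
      rw [Set.indicator_apply]
      simp only [hf, Set.mem_Iic]
    rw [hind, integral_indicator_const _ measurableSet_Iic, smul_eq_mul, measureReal_def, mul_comm]
  simp_rw [hinner]
  rw [hμ, expLaw_integral hOm]
  have hcongr : ∫ y in Ici (0:ℝ),
        (1/Om * Real.exp (-y/Om)) * ((μ (Iic y)).toReal * Real.logb 2 (1+y))
      = ∫ y in Ici (0:ℝ), ((1/(Om * Real.log 2)) * (Real.log (1+y) * Real.exp (-(1/Om * y)))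
          - (1/(Om * Real.log 2)) * (Real.log (1+y) * Real.exp (-(2/Om * y)))) := by
    refine setIntegral_congr_fun measurableSet_Ici (fun y hy => ?_)
    have hy0 : (0:ℝ) ≤ y := hy
    have hle1 : Real.exp (-(y/Om)) ≤ 1 :=
      Real.exp_le_one_iff.mpr (neg_nonpos.mpr (div_nonneg hy0 hOm.le))
    rw [hμ, expLaw_Iic hOm hy0, ENNReal.toReal_ofReal (by linarith)]
    have e2 : Real.exp (-(2/Om * y)) = Real.exp (-(1/Om * y)) * Real.exp (-(1/Om * y)) := by
      rw [← Real.exp_add]; ring_nf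
    have e1 : Real.exp (-y/Om) = Real.exp (-(1/Om * y)) := by ring_nf
    have e3 : Real.exp (-(y/Om)) = Real.exp (-(1/Om * y)) := by ring_nf
    rw [e1, e2, e3, show Real.logb 2 (1+y) = Real.log (1+y) / Real.log 2 from rfl]
    ring
  rw [hcongr, integral_Ici_eq_integral_Ioi]
  have ha1 : (0:ℝ) < 1/Om := by positivity
  have ha2 : (0:ℝ) < 2/Om := by positivity
  have hi1 := (integrableOn_log_mul_exp ha1).const_mul (1/(Om * Real.log 2))
  have hi2 := (integrableOn_log_mul_exp ha2).const_mul (1/(Om * Real.log 2))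
  rw [integral_sub hi1 hi2, integral_const_mul, integral_const_mul,
    integral_log_mul_exp ha1, integral_log_mul_exp ha2]
  have hlog2 : Real.log 2 ≠ 0 := by
    have := Real.log_pos (by norm_num : (1:ℝ) < 2); linarith
  field_simp
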